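/- Let N ≥ 1 be an integer, let A₀, …, A_{2N−2} ∈ ℂ be pairwise distinct, and let γ = [[a,b],[c,d]] ∈ SL₂(ℂ). Let z, y ∈ ℂ with z ≠ y, z ≠ A_l for all l, and suppose cz + d ≠ 0, cy + d ≠ 0, and cA_l + d ≠ 0 for all l. Then π_N(γ·z, γ·y; γ·A) · (cz + d)^{−2N} · (cy + d)^{2N−2} = π_N(z, y; A), where γ·A denotes the tuple (γ·A₀, …, γ·A_{2N−2}). Equivalently, the bidifferential Π_N(z,y) = π_N(z,y;A) dz^N dy^{1−N} is Möbius invariant: Π_N(γ·z, γ·y; γ·A) = Π_N(z, y; A). -/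

import Mathlib

/-- The Möbius transformation associated to [[a,b],[c,d]]. -/
noncomputable def mobius (a b c d z : ℂ) : ℂ := (a * z + b) / (c * z + d)

/-- The Bers kernel of weight (N, 1−N):
π_N(z, y; A) = (1/(z−y)) · ∏_{l=0}^{2N−2} (y − A_l)/(z − A_l). -/
noncomputable def bersPi (N : ℕ) (A : Fin (2 * N - 1) → ℂ) (z y : ℂ) : ℂ :=
  (1 / (z - y)) * ∏ l, (y - A l) / (z - A l)

/-- For a Möbius map with determinant 1: γu − γv = (u−v)/((cu+d)(cv+d)). -/
lemma mobius_sub (a b c d u v : ℂ) (hdet : a * d - b * c = 1)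
    (hu : c * u + d ≠ 0) (hv : c * v + d ≠ 0) :
    mobius a b c d u - mobius a b c d v = (u - v) / ((c * u + d) * (c * v + d)) := by
  unfold mobius
  rw [div_sub_div _ _ hu hv, div_eq_div_iff (mul_ne_zero hu hv) (mul_ne_zero hu hv)]
  ring_nf
  linear_combination (u - v) * ((c * u + d) * (c * v + d)) * hdet

/-- Möbius invariance of the Bers kernel: for γ ∈ SL₂(ℂ),
π_N(γ·z, γ·y; γ·A) · (cz+d)^{−2N} · (cy+d)^{2N−2} = π_N(z, y; A). -/
theorem bersPi_mobius_invariant (N : ℕ) (hN : 1 ≤ N) (A : Fin (2 * N - 1) → ℂ)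
    (hA : Function.Injective A)
    (a b c d : ℂ) (hdet : a * d - b * c = 1) (z y : ℂ)
    (hzy : z ≠ y) (hzA : ∀ l, z ≠ A l)
    (hz : c * z + d ≠ 0) (hy : c * y + d ≠ 0) (hAl : ∀ l, c * A l + d ≠ 0) :
    bersPi N (fun l => mobius a b c d (A l)) (mobius a b c d z) (mobius a b c d y)
        * (c * z + d) ^ (-(2 * (N : ℤ))) * (c * y + d) ^ (2 * (N : ℤ) - 2)
      = bersPi N A z y := by
  obtain ⟨M, rfl⟩ : ∃ M, N = M + 1 := ⟨N - 1, by omega⟩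
  unfold bersPi
  have hterm : ∀ l, (mobius a b c d y - mobius a b c d (A l)) /
      (mobius a b c d z - mobius a b c d (A l))
      = (y - A l) / (z - A l) * ((c * z + d) / (c * y + d)) := by
    intro l
    rw [mobius_sub a b c d y (A l) hdet hy (hAl l),
        mobius_sub a b c d z (A l) hdet hz (hAl l)]
    have h1 : z - A l ≠ 0 := sub_ne_zero.mpr (hzA l)
    have h2 : (c * y + d) * (c * A l + d) ≠ 0 := mul_ne_zero hy (hAl l)
    have h3 : (c * z + d) * (c * A l + d) ≠ 0 := mul_ne_zero hz (hAl l)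
    rw [div_div_div_comm, mul_div_mul_right _ _ (hAl l), div_div_eq_mul_div,
      mul_div_assoc]
  rw [mobius_sub a b c d z y hdet hz hy]
  rw [Finset.prod_congr rfl (fun l _ => hterm l), Finset.prod_mul_distrib,
    Finset.prod_const, Finset.card_univ, Fintype.card_fin]
  have hK : 2 * (M + 1) - 1 = 2 * M + 1 := by omega
  have hp : ((c * z + d) / (c * y + d)) ^ (2 * (M + 1) - 1)
      = ((c * z + d) / (c * y + d)) ^ (2 * M + 1) := by rw [hK]
  have e1 : (-(2 * ((M + 1 : ℕ) : ℤ))) = -((2 * M + 2 : ℕ) : ℤ) := by push_cast; ring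
  have e2 : (2 * ((M + 1 : ℕ) : ℤ) - 2) = ((2 * M : ℕ) : ℤ) := by push_cast; ring
  rw [hp, e1, e2, zpow_neg, zpow_natCast, zpow_natCast, one_div_div]
  have hzy' : z - y ≠ 0 := sub_ne_zero.mpr hzy
  set P := ∏ l : Fin (2 * (M + 1) - 1), (y - A l) / (z - A l) with hP
  rw [div_pow]
  field_simp
  ring
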